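/- Let m ≥ 4 and n ≥ 2. The number of tuples (m_2, ..., m_n) that can arise as the multitype of a pseudoconvex hypersurface of finite 1-type m via the balanced-exponent equations ∑_{l=2}^{j} 2k_{jl}/m_l = 1 (with k_{jj} ≥ 1 and 0 ≤ k_{jl}, 2k_{jl} ≤ m for all l) is at most (⌊m/2⌋ + 1)^{(n-2)(n-1)/2} · ⌊m/2⌋^{n-1}. -/

import Mathlib

open Finset

/-- Auxiliary: `M` is determined by `k` via the balanced equations. -/
lemma det_aux (N : ℕ) (M M' : Fin N → ℚ) (k : Fin N → Fin N → ℕ)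
    (hM : ∀ l, 0 < M l) (hM' : ∀ l, 0 < M' l)
    (hk1 : ∀ j, 1 ≤ k j j)
    (hs : ∀ j, ∑ l ∈ Finset.Iic j, ((2 * k j l : ℕ) : ℚ) / M l = 1)
    (hs' : ∀ j, ∑ l ∈ Finset.Iic j, ((2 * k j l : ℕ) : ℚ) / M' l = 1) :
    M = M' := by
  suffices H : ∀ t, ∀ j : Fin N, (j : ℕ) < t → M j = M' j from
    funext fun j => H ((j : ℕ) + 1) j (Nat.lt_succ_self _)
  intro t
  induction t with
  | zero => exact fun j hj => absurd hj (Nat.not_lt_zero _)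
  | succ t iht =>
    intro j hj
    have ih : ∀ l : Fin N, l < j → M l = M' l := fun l hl =>
      iht l (lt_of_lt_of_le (Fin.lt_def.mp hl) (Nat.lt_succ_iff.mp hj))
    have e1 := hs j; have e2 := hs' j
    rw [← Finset.Iio_insert, Finset.sum_insert (by simp)] at e1 e2
    have hsum : ∑ l ∈ Finset.Iio j, ((2 * k j l : ℕ) : ℚ) / M l
        = ∑ l ∈ Finset.Iio j, ((2 * k j l : ℕ) : ℚ) / M' l := by
      refine Finset.sum_congr rfl fun l hl => ?_
      rw [ih l (Finset.mem_Iio.mp hl)]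
    have heq : ((2 * k j j : ℕ) : ℚ) / M j = ((2 * k j j : ℕ) : ℚ) / M' j := by
      linarith
    have hc0 : (2 * k j j : ℕ) ≠ 0 := by have := hk1 j; omega
    have hc : ((2 * k j j : ℕ) : ℚ) ≠ 0 := Nat.cast_ne_zero.mpr hc0
    rw [div_eq_div_iff (ne_of_gt (hM j)) (ne_of_gt (hM' j))] at heq
    exact (mul_left_cancel₀ hc heq).symm

def stmt16Cond (m N : ℕ) (M : Fin N → ℚ) : Prop :=
  (∀ l, 0 < M l) ∧
  ∃ k : Fin N → Fin N → ℕ,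
    (∀ j, 1 ≤ k j j) ∧ (∀ j l, 2 * k j l ≤ m) ∧
    (∀ j, ∑ l ∈ Finset.Iic j, ((2 * k j l : ℕ) : ℚ) / M l = 1)

open Classical in
noncomputable def stmt16F (m N : ℕ) (hm : 4 ≤ m) (M : Fin N → ℚ) :
    ∀ j : Fin N, (Fin (j : ℕ) → Fin (m / 2 + 1)) × Fin (m / 2) :=
  if hM : stmt16Cond m N M then
    fun j =>
      (fun l => ⟨hM.2.choose j ⟨(l : ℕ), lt_trans l.2 j.2⟩, by
          have := hM.2.choose_spec.2.1 j ⟨(l : ℕ), lt_trans l.2 j.2⟩; omega⟩,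
       ⟨hM.2.choose j j - 1, by
          have h1 := hM.2.choose_spec.1 j
          have h2 := hM.2.choose_spec.2.1 j j
          omega⟩)
  else fun _ => (fun _ => ⟨0, Nat.succ_pos _⟩, ⟨0, by omega⟩)

lemma stmt16F_injOn (m N : ℕ) (hm : 4 ≤ m) :
    Set.InjOn (stmt16F m N hm) {M | stmt16Cond m N M} := by
  intro M hMs M' hMs' hf
  have hM : stmt16Cond m N M := hMs
  have hM' : stmt16Cond m N M' := hMs'
  unfold stmt16F at hf
  rw [dif_pos hM, dif_pos hM'] at hf
  have hk := hM.2.choose_spec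
  have hk' := hM'.2.choose_spec
  set k := hM.2.choose with hkdef
  set k' := hM'.2.choose with hk'def
  have hdiag : ∀ j, k j j = k' j j := by
    intro j
    have h2 := congrArg Prod.snd (congrFun hf j)
    simp only at h2
    rw [Fin.mk.injEq] at h2
    have h2' : k j j - 1 = k' j j - 1 := h2
    have a1 := hk.1 j; have a2 := hk'.1 j
    omega
  have hlow : ∀ j l : Fin N, l < j → k j l = k' j l := by
    intro j l hl
    have h1 := congrFun (congrArg Prod.fst (congrFun hf j)) ⟨(l : ℕ), Fin.lt_def.mp hl⟩
    simp only at h1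
    rw [Fin.mk.injEq] at h1
    have h1' : k j ⟨(l : ℕ), lt_trans (Fin.lt_def.mp hl) j.2⟩
        = k' j ⟨(l : ℕ), lt_trans (Fin.lt_def.mp hl) j.2⟩ := h1
    have hle : (⟨(l : ℕ), lt_trans (Fin.lt_def.mp hl) j.2⟩ : Fin N) = l := by
      apply Fin.ext; rfl
    rwa [hle] at h1'
  have hs'' : ∀ j, ∑ l ∈ Finset.Iic j, ((2 * k j l : ℕ) : ℚ) / M' l = 1 := by
    intro j
    rw [← hk'.2.2 j]
    refine Finset.sum_congr rfl fun l hl => ?_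
    rcases lt_or_eq_of_le (Finset.mem_Iic.mp hl) with h | h
    · rw [hlow j l h]
    · subst h; rw [hdiag l]
  exact det_aux N M M' k hM.1 hM'.1 hk.1 hk.2.2 hs''

/-- For `m ≥ 4`, `n ≥ 2`, the number of tuples `(m_2, …, m_n)` of positive
rationals that can arise via the balanced-exponent equations `∑_{l=2}^{j} 2k_{jl}/m_l = 1`
(with integers `k_{jj} ≥ 1`, `k_{jl} ≥ 0`, `2k_{jl} ≤ m`) is at most
`(⌊m/2⌋ + 1)^{(n-2)(n-1)/2} ⌊m/2⌋^{n-1}`. -/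
theorem stmt_16 (m n : ℕ) (hm : 4 ≤ m) (hn : 2 ≤ n) :
    Set.encard { M : Fin (n - 1) → ℚ |
      (∀ l, 0 < M l) ∧
      ∃ k : Fin (n - 1) → Fin (n - 1) → ℕ,
        (∀ j, 1 ≤ k j j) ∧ (∀ j l, 2 * k j l ≤ m) ∧
        (∀ j, ∑ l ∈ Finset.Iic j, ((2 * k j l : ℕ) : ℚ) / M l = 1) }
      ≤ (((m / 2 + 1) ^ ((n - 2) * (n - 1) / 2) * (m / 2) ^ (n - 1) : ℕ) : ℕ∞) := by
  classical
  show Set.encard {M : Fin (n - 1) → ℚ | stmt16Cond m (n - 1) M} ≤ _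
  have h1 : Set.encard {M : Fin (n - 1) → ℚ | stmt16Cond m (n - 1) M}
      ≤ (Set.univ : Set (∀ j : Fin (n - 1),
          (Fin (j : ℕ) → Fin (m / 2 + 1)) × Fin (m / 2))).encard := by
    rw [← (stmt16F_injOn m (n - 1) hm).encard_image]
    exact Set.encard_le_encard (Set.subset_univ _)
  rw [Set.encard_univ, ENat.card_eq_coe_fintype_card] at h1
  refine h1.trans_eq ?_
  norm_cast
  rw [Fintype.card_pi]
  have hc : ∀ j : Fin (n - 1),
      Fintype.card ((Fin (j : ℕ) → Fin (m / 2 + 1)) × Fin (m / 2))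
        = (m / 2 + 1) ^ (j : ℕ) * (m / 2) := by
    intro j
    rw [Fintype.card_prod, Fintype.card_fun, Fintype.card_fin, Fintype.card_fin,
      Fintype.card_fin]
  rw [Finset.prod_congr rfl fun j _ => hc j, Finset.prod_mul_distrib,
    Finset.prod_const, Finset.card_univ, Fintype.card_fin,
    Finset.prod_pow_eq_pow_sum]
  congr 2
  rw [Fin.sum_univ_eq_sum_range (fun i => i) (n - 1), Finset.sum_range_id]
  have h2 : n - 1 - 1 = n - 2 := by omega
  rw [h2, Nat.mul_comm]
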